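/- Suppose h₁ is real analytic on (−1, 2), h₂ is real analytic on (−1, ψ(2)) with ψ(t) = t·exp(−1/t), and h₁(t) = h₂(ψ(t)) for all t ∈ (1, 2). Then h₁ is constant on (−1, 2) and h₂ is constant on (−1, ψ(2)). -/

import Mathlib

open Set Filter Topology

noncomputable def psi (t : ℝ) : ℝ := t * Real.exp (-1 / t)

lemma psi_pos {t : ℝ} (ht : 0 < t) : 0 < psi t :=
  mul_pos ht (Real.exp_pos _)

lemma psi_strictMono {a b : ℝ} (ha : 0 < a) (hab : a < b) : psi a < psi b := by
  have hb : 0 < b := ha.trans hab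
  have h1 : Real.exp (-1 / a) ≤ Real.exp (-1 / b) := by
    apply Real.exp_le_exp.2
    rw [neg_div, neg_div, neg_le_neg_iff]
    exact one_div_le_one_div_of_le ha hab.le
  exact mul_lt_mul hab h1 (Real.exp_pos _) hb.le

lemma psi_analyticAt {t : ℝ} (ht : t ≠ 0) : AnalyticAt ℝ psi t := by
  have : AnalyticAt ℝ (fun s : ℝ => -1 / s) t :=
    (analyticAt_const (v := (-1 : ℝ))).div analyticAt_id ht
  exact analyticAt_id.mul (analyticAt_rexp.comp this)

lemma psi_tendsto_zero : Tendsto psi (𝓝[>] (0:ℝ)) (𝓝 0) := by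
  apply tendsto_of_tendsto_of_tendsto_of_le_of_le' tendsto_const_nhds
    (tendsto_id.mono_left nhdsWithin_le_nhds)
  · filter_upwards [self_mem_nhdsWithin] with t (ht : (0:ℝ) < t)
    exact (psi_pos ht).le
  · filter_upwards [self_mem_nhdsWithin] with t (ht : (0:ℝ) < t)
    calc psi t = t * Real.exp (-1 / t) := rfl
    _ ≤ t * 1 := by
        apply mul_le_mul_of_nonneg_left _ ht.le
        rw [Real.exp_le_one_iff, neg_div]
        simp [le_of_lt, ht, one_div_pos.2 ht]
    _ = t := mul_one t

lemma psi_div_pow_tendsto_zero (n : ℕ) :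
    Tendsto (fun t => psi t / t ^ n) (𝓝[>] (0:ℝ)) (𝓝 0) := by
  have key : Tendsto (fun t : ℝ => t * ((1/t) ^ n * Real.exp (-(1/t)))) (𝓝[>] (0:ℝ)) (𝓝 0) := by
    have h1 : Tendsto (fun t : ℝ => (1/t) ^ n * Real.exp (-(1/t))) (𝓝[>] (0:ℝ)) (𝓝 0) := by
      have := (Real.tendsto_pow_mul_exp_neg_atTop_nhds_zero n).comp
        (tendsto_inv_nhdsGT_zero (𝕜 := ℝ))
      simpa [Function.comp_def, one_div] using this
    have h2 : Tendsto (fun t : ℝ => t) (𝓝[>] (0:ℝ)) (𝓝 0) :=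
      tendsto_id.mono_left nhdsWithin_le_nhds
    simpa using h2.mul h1
  apply key.congr'
  filter_upwards [self_mem_nhdsWithin] with t (ht : (0:ℝ) < t)
  have htn : t ^ n ≠ 0 := pow_ne_zero n ht.ne'
  field_simp [psi]
  rw [psi, one_div_pow, neg_div, one_div]
  field_simp

/-- If h₁ is real analytic on (−1,2), h₂ is real analytic on (−1, ψ(2)),
and h₁ = h₂ ∘ ψ on (1,2), then h₁ is constant on (−1,2) and h₂ is constant
on (−1, ψ(2)). -/
theorem analytic_first_integrals_constant_on_intervals
    (h₁ h₂ : ℝ → ℝ)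
    (hh₁ : ∀ x ∈ Ioo (-1 : ℝ) 2, AnalyticAt ℝ h₁ x)
    (hh₂ : ∀ x ∈ Ioo (-1 : ℝ) (psi 2), AnalyticAt ℝ h₂ x)
    (heq : ∀ t ∈ Ioo (1 : ℝ) 2, h₁ t = h₂ (psi t)) :
    (∀ s ∈ Ioo (-1 : ℝ) 2, ∀ t ∈ Ioo (-1 : ℝ) 2, h₁ s = h₁ t) ∧
    (∀ s ∈ Ioo (-1 : ℝ) (psi 2), ∀ t ∈ Ioo (-1 : ℝ) (psi 2), h₂ s = h₂ t) := by
  have hpsi2pos : (0:ℝ) < psi 2 := psi_pos (by norm_num)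
  -- ψ maps (0,2) into (-1, ψ 2)
  have hmaps : ∀ t ∈ Ioo (0:ℝ) 2, psi t ∈ Ioo (-1 : ℝ) (psi 2) := by
    intro t ht
    exact ⟨lt_trans (show (-1:ℝ) < 0 by norm_num) (psi_pos ht.1), psi_strictMono ht.1 ht.2⟩
  -- Step A: h₁ = h₂ ∘ ψ on (0,2)
  have hA : EqOn h₁ (fun t => h₂ (psi t)) (Ioo (0:ℝ) 2) := by
    apply AnalyticOnNhd.eqOn_of_preconnected_of_eventuallyEq (𝕜 := ℝ)
      (f := h₁) (g := fun t => h₂ (psi t)) (U := Ioo (0:ℝ) 2)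
      (z₀ := (3/2 : ℝ))
    · intro x hx
      exact hh₁ x ⟨lt_trans (show (-1:ℝ) < 0 by norm_num) hx.1, hx.2⟩
    · intro x hx
      exact AnalyticAt.comp (hh₂ _ (hmaps x hx)) (psi_analyticAt hx.1.ne')
    · exact (isPreconnected_Ioo)
    · constructor <;> norm_num
    · have : Ioo (1:ℝ) 2 ∈ 𝓝 (3/2 : ℝ) := by
        apply Ioo_mem_nhds <;> norm_num
      filter_upwards [this] with t ht
      exact heq t ht
  -- Step B: h₁ - h₂ 0 vanishes to infinite order at 0⁺, hence near 0
  set f : ℝ → ℝ := fun t => h₁ t - h₂ 0 with hf_def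
  have h0mem : (0:ℝ) ∈ Ioo (-1 : ℝ) 2 := by constructor <;> norm_num
  have h0mem' : (0:ℝ) ∈ Ioo (-1 : ℝ) (psi 2) := ⟨by norm_num, hpsi2pos⟩
  have hfan : AnalyticAt ℝ f 0 := (hh₁ 0 h0mem).sub analyticAt_const
  -- auxiliary limits
  have hpsi_in : Tendsto psi (𝓝[>] (0:ℝ)) (𝓝[≠] (0:ℝ)) := by
    rw [tendsto_nhdsWithin_iff]
    refine ⟨psi_tendsto_zero, ?_⟩
    filter_upwards [self_mem_nhdsWithin] with t (ht : (0:ℝ) < t)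
    exact (psi_pos ht).ne'
  have hslope : Tendsto (fun t => slope h₂ 0 (psi t)) (𝓝[>] (0:ℝ)) (𝓝 (deriv h₂ 0)) := by
    have hd : HasDerivAt h₂ (deriv h₂ 0) 0 :=
      ((hh₂ 0 h0mem').differentiableAt).hasDerivAt
    exact (hasDerivAt_iff_tendsto_slope.1 hd).comp hpsi_in
  have horder : analyticOrderAt f 0 = ⊤ := by
    by_contra hne
    obtain ⟨n, hn⟩ := WithTop.ne_top_iff_exists.1 hne
    obtain ⟨g, hg, hg0, hfg⟩ := (hfan.analyticOrderAt_eq_natCast (n := n)).1 hn.symm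
    -- L1 : f t / t^n → g 0 along 0⁺
    have L1 : Tendsto (fun t => f t / t ^ n) (𝓝[>] (0:ℝ)) (𝓝 (g 0)) := by
      have hgc : Tendsto g (𝓝[>] (0:ℝ)) (𝓝 (g 0)) :=
        (hg.continuousAt.tendsto).mono_left nhdsWithin_le_nhds
      apply hgc.congr'
      filter_upwards [self_mem_nhdsWithin,
        mem_nhdsWithin_of_mem_nhds hfg] with t (ht : (0:ℝ) < t) ht2
      rw [ht2]
      simp only [sub_zero, smul_eq_mul]
      field_simp
    -- L2 : f t / t^n → 0 along 0⁺
    have L2 : Tendsto (fun t => f t / t ^ n) (𝓝[>] (0:ℝ)) (𝓝 0) := by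
      have := hslope.mul (psi_div_pow_tendsto_zero n)
      rw [mul_zero] at this
      apply this.congr'
      have hIoo : Ioo (0:ℝ) 2 ∈ 𝓝[>] (0:ℝ) :=
        mem_nhdsWithin.2 ⟨Iio 2, isOpen_Iio, by norm_num, by
          intro x hx; exact ⟨hx.2, hx.1⟩⟩
      filter_upwards [hIoo] with t ht
      have hpt : psi t ≠ 0 := (psi_pos ht.1).ne'
      have : f t = h₂ (psi t) - h₂ 0 := by
        simp only [hf_def]
        rw [hA ht]
      rw [this, slope_def_field]
      field_simp
      rw [sub_zero]
    have : g 0 = 0 := tendsto_nhds_unique L1 L2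
    exact hg0 this
  have hfzero : f =ᶠ[𝓝 (0:ℝ)] 0 := analyticOrderAt_eq_top.1 horder
  -- identity theorem for h₁
  have hconst1 : EqOn h₁ (fun _ => h₂ 0) (Ioo (-1 : ℝ) 2) := by
    apply AnalyticOnNhd.eqOn_of_preconnected_of_eventuallyEq
      (U := Ioo (-1 : ℝ) 2) (z₀ := (0:ℝ)) (fun x hx => hh₁ x hx)
      (fun x _ => analyticAt_const) isPreconnected_Ioo h0mem
    filter_upwards [hfzero] with t ht
    have : h₁ t - h₂ 0 = 0 := ht
    linarith
  -- h₂ is constant on (ψ 1, ψ 2) by surjectivity of ψ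
  have hpsi1 : (0:ℝ) < psi 1 := psi_pos one_pos
  have hpsi12 : psi 1 < psi 2 := psi_strictMono one_pos one_lt_two
  have hcont : ContinuousOn psi (Icc (1:ℝ) 2) := by
    intro x hx
    exact (psi_analyticAt (by linarith [hx.1] : x ≠ 0)).continuousAt.continuousWithinAt
  have hsurj : Ioo (psi 1) (psi 2) ⊆ psi '' Ioo (1:ℝ) 2 :=
    intermediate_value_Ioo one_le_two hcont
  have hconst2' : ∀ y ∈ Ioo (psi 1) (psi 2), h₂ y = h₂ 0 := by
    intro y hy
    obtain ⟨t, ht, rfl⟩ := hsurj hy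
    rw [← heq t ht]
    exact hconst1 ⟨by linarith [ht.1], ht.2⟩
  have hmid : psi (3/2 : ℝ) ∈ Ioo (psi 1) (psi 2) :=
    ⟨psi_strictMono one_pos (by norm_num), psi_strictMono (by norm_num) (by norm_num)⟩
  have hconst2 : EqOn h₂ (fun _ => h₂ 0) (Ioo (-1 : ℝ) (psi 2)) := by
    apply AnalyticOnNhd.eqOn_of_preconnected_of_eventuallyEq
      (U := Ioo (-1 : ℝ) (psi 2)) (z₀ := psi (3/2 : ℝ)) (fun x hx => hh₂ x hx)
      (fun x _ => analyticAt_const) isPreconnected_Ioo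
      ⟨by linarith [psi_pos (by norm_num : (0:ℝ) < 3/2)], hmid.2⟩
    filter_upwards [Ioo_mem_nhds hmid.1 hmid.2] with y hy
    exact hconst2' y hy
  constructor
  · intro s hs t ht; rw [hconst1 hs, hconst1 ht]
  · intro s hs t ht; rw [hconst2 hs, hconst2 ht]
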